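/- arXiv:1801.07040 — 3 statements merged into one kernel-verified Lean document; each statement's English description precedes it below -/
import Mathlib

section
/- Let K ⊆ ℂ be a subfield stable under complex conjugation, let n ≥ 1, and let μ₁, …, μₙ ∈ K be such that the vectors (μ₁, …, μₙ) and (μ̄₁, …, μ̄ₙ) in ℂⁿ are linearly independent over ℂ. Let a = (a_{ij}) be an n × n matrix with integer entries and let λ, λ' ∈ ℂ satisfy Σ_j a_{ij} μ_j = λ μ_i + λ' μ̄_i for all i = 1, …, n. Then λ ∈ K and λ' ∈ K. -/
open scoped BigOperators

/-- Let `K ⊆ ℂ` be a subfield stable under complex conjugation, `n ≥ 1`, and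
`μ₁, …, μₙ ∈ K` such that `(μ₁, …, μₙ)` and `(μ̄₁, …, μ̄ₙ)` are linearly independent over `ℂ`.
If an integer matrix `a` and `λ, λ' ∈ ℂ` satisfy `Σ_j a_{ij} μ_j = λ μ_i + λ' μ̄_i` for all
`i`, then `λ ∈ K` and `λ' ∈ K`. -/
theorem stmt_3 (K : Subfield ℂ) (hconj : ∀ x ∈ K, (starRingEnd ℂ) x ∈ K)
    (n : ℕ) (hn : 1 ≤ n) (μ : Fin n → K)
    (hind : LinearIndependent ℂ
      ![(fun i => (μ i : ℂ)), (fun i => (starRingEnd ℂ) (μ i : ℂ))])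
    (a : Matrix (Fin n) (Fin n) ℤ) (lam lam' : ℂ)
    (heq : ∀ i, ∑ j, (a i j : ℂ) * (μ j : ℂ) =
      lam * (μ i : ℂ) + lam' * (starRingEnd ℂ) (μ i : ℂ)) :
    lam ∈ K ∧ lam' ∈ K := by
  set u : Fin n → ℂ := fun i => (μ i : ℂ) with hu
  set w : Fin n → ℂ := fun i => (starRingEnd ℂ) (μ i : ℂ) with hw
  -- find a nonvanishing 2×2 minor
  have hex : ∃ i j, u i * w j - u j * w i ≠ 0 := by
    by_contra h
    push_neg at h
    have hu0 : u ≠ 0 := by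
      have h0 : ![u, w] 0 ≠ 0 := hind.ne_zero 0
      simpa using h0
    obtain ⟨i0, hi0⟩ := Function.ne_iff.mp hu0
    simp only [Pi.zero_apply] at hi0
    have hg := Fintype.linearIndependent_iff.mp hind ![w i0, -(u i0)] ?_ 1
    · simp at hg
      exact hi0 hg
    · funext x
      have hx := h x i0
      simp [Fin.sum_univ_two]
      linear_combination hx
  obtain ⟨i, j, hd⟩ := hex
  have hvK : ∀ k, (∑ l, (a k l : ℂ) * u l) ∈ K := by
    intro k
    refine sum_mem fun l _ => mul_mem ?_ (μ l).2
    exact_mod_cast intCast_mem K (a k l)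
  have hwK : ∀ k, w k ∈ K := fun k => hconj _ (μ k).2
  have huK : ∀ k, u k ∈ K := fun k => (μ k).2
  have ei : ∑ l, (a i l : ℂ) * u l = lam * u i + lam' * w i := heq i
  have ej : ∑ l, (a j l : ℂ) * u l = lam * u j + lam' * w j := heq j
  constructor
  · have hl : lam = ((∑ l, (a i l : ℂ) * u l) * w j - (∑ l, (a j l : ℂ) * u l) * w i)
        / (u i * w j - u j * w i) := by
      rw [ei, ej]
      rw [eq_div_iff hd]
      ring
    rw [hl]
    exact div_mem (sub_mem (mul_mem (hvK i) (hwK j)) (mul_mem (hvK j) (hwK i)))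
      (sub_mem (mul_mem (huK i) (hwK j)) (mul_mem (huK j) (hwK i)))
  · have hl : lam' = ((u i) * (∑ l, (a j l : ℂ) * u l) - (u j) * (∑ l, (a i l : ℂ) * u l))
        / (u i * w j - u j * w i) := by
      rw [ei, ej]
      field_simp
      ring
    rw [hl]
    exact div_mem (sub_mem (mul_mem (huK i) (hvK j)) (mul_mem (huK j) (hvK i)))
      (sub_mem (mul_mem (huK i) (hwK j)) (mul_mem (huK j) (hwK i)))
end

section
/- Let K ⊆ ℂ be a number field stable under complex conjugation, let n ≥ 1, and let μ₁, …, μₙ ∈ K be such that the vectors (μ₁, …, μₙ) and (μ̄₁, …, μ̄ₙ) in ℂⁿ are linearly independent over ℂ. Then there exists a positive integer N, depending only on μ, such that for every n × n integer matrix a = (a_{ij}) and all λ, λ' ∈ ℂ satisfying Σ_j a_{ij} μ_j = λ μ_i + λ' μ̄_i for all i, both N·λ and N·λ' are algebraic integers lying in K. -/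
open scoped BigOperators

private lemma aux_int_cast_integral (m : ℤ) : IsIntegral ℤ (m : ℂ) := by
  simpa using isIntegral_algebraMap (R := ℤ) (A := ℂ) (x := m)

private lemma aux_nat_cast_integral (m : ℕ) : IsIntegral ℤ (m : ℂ) := by
  simpa using aux_int_cast_integral (m : ℤ)

/-- Common denominator for a finite family of algebraic numbers. -/
private lemma aux_exists_den {ι : Type*} [Fintype ι] [DecidableEq ι] (x : ι → ℂ)
    (hx : ∀ i, IsAlgebraic ℚ (x i)) :
    ∃ N : ℕ, 0 < N ∧ ∀ i, IsIntegral ℤ ((N : ℂ) * x i) := by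
  have hx' : ∀ i, IsAlgebraic ℤ (x i) := fun i =>
    (IsFractionRing.isAlgebraic_iff ℤ ℚ ℂ).mpr (hx i)
  have H : ∀ i, ∃ g : ℕ, 0 < g ∧ IsIntegral ℤ ((g : ℂ) * x i) := by
    intro i
    obtain ⟨y, hy, hz⟩ := IsAlgebraic.exists_integral_multiple (hx' i)
    have hz' : IsIntegral ℤ ((y : ℂ) * x i) := by
      simpa [zsmul_eq_mul] using hz
    refine ⟨y.natAbs, Int.natAbs_pos.mpr hy, ?_⟩
    have h3 : ((y.natAbs : ℕ) : ℂ) = ((y.natAbs : ℤ) : ℂ) := (Int.cast_natCast _).symm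
    rcases Int.natAbs_eq y with h | h
    · rw [h3, show ((y.natAbs : ℤ) : ℂ) = (y : ℂ) from by rw [← h]]
      exact hz'
    · have h2 : ((y.natAbs : ℤ)) = -y := by omega
      rw [show ((y.natAbs : ℕ) : ℂ) * x i = -((y : ℂ) * x i) from by
        rw [h3, h2]; push_cast; ring]
      exact hz'.neg
  choose g hg hgi using H
  refine ⟨∏ i, g i, Finset.prod_pos (fun i _ => hg i), fun i => ?_⟩
  have hsplit : (∏ k, g k) = (∏ k ∈ Finset.univ.erase i, g k) * g i :=
    (Finset.prod_erase_mul _ _ (Finset.mem_univ i)).symm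
  rw [hsplit, Nat.cast_mul, mul_assoc]
  exact (aux_nat_cast_integral _).mul (hgi i)

/-- Let `K ⊆ ℂ` be a number field stable under complex conjugation and `μ₁, …, μₙ ∈ K` with
`(μ₁, …, μₙ)` and `(μ̄₁, …, μ̄ₙ)` linearly independent over `ℂ`.  Then there is a positive
integer `N`, depending only on `μ`, such that for every integer matrix `a` and all
`λ, λ' : ℂ` with `Σ_j a_{ij} μ_j = λ μ_i + λ' μ̄_i` for all `i`, both `N·λ` and `N·λ'` are
algebraic integers lying in `K`. -/
theorem stmt_5 (K : IntermediateField ℚ ℂ) [FiniteDimensional ℚ K]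
    (hconj : ∀ x ∈ K, (starRingEnd ℂ) x ∈ K)
    (n : ℕ) (hn : 1 ≤ n) (μ : Fin n → K)
    (hind : LinearIndependent ℂ
      ![(fun i => (μ i : ℂ)), (fun i => (starRingEnd ℂ) (μ i : ℂ))]) :
    ∃ N : ℕ, 0 < N ∧
      ∀ (a : Matrix (Fin n) (Fin n) ℤ) (lam lam' : ℂ),
        (∀ i, ∑ j, (a i j : ℂ) * (μ j : ℂ) =
          lam * (μ i : ℂ) + lam' * (starRingEnd ℂ) (μ i : ℂ)) →
        (IsIntegral ℤ ((N : ℂ) * lam) ∧ (N : ℂ) * lam ∈ K ∧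
          IsIntegral ℤ ((N : ℂ) * lam') ∧ (N : ℂ) * lam' ∈ K) := by
  set c : Fin n → ℂ := fun i => (μ i : ℂ) with hc
  set d : Fin n → ℂ := fun i => (starRingEnd ℂ) (μ i : ℂ) with hd
  have hcK : ∀ i, c i ∈ K := fun i => (μ i).2
  have hdK : ∀ i, d i ∈ K := fun i => hconj _ (hcK i)
  -- find a nonzero 2×2 minor
  have hpair := LinearIndependent.pair_iff.mp hind
  have hminor : ∃ i₀ i₁, c i₀ * d i₁ - c i₁ * d i₀ ≠ 0 := by
    by_contra h
    push_neg at h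
    have hprop : ∀ i j, c i * d j = c j * d i := by
      intro i j
      have := h i j
      linear_combination this
    have hcne : c ≠ 0 := by
      intro h0
      have := hpair 1 0 (by
        ext j
        simp [h0])
      exact one_ne_zero this.1
    obtain ⟨i₀, hi₀⟩ := Function.ne_iff.mp hcne
    have := hpair (d i₀) (-(c i₀)) (by
      ext j
      have := hprop j i₀
      simp only [Pi.add_apply, Pi.smul_apply, smul_eq_mul, Pi.zero_apply,
        Matrix.cons_val_zero, Matrix.cons_val_one, Matrix.head_cons]
      linear_combination this)
    exact hi₀ (by simpa using (neg_eq_zero.mp this.2))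
  obtain ⟨i₀, i₁, hD⟩ := hminor
  set D : ℂ := c i₀ * d i₁ - c i₁ * d i₀ with hDdef
  have hDK : D ∈ K := sub_mem (mul_mem (hcK i₀) (hdK i₁)) (mul_mem (hcK i₁) (hdK i₀))
  -- the 4n building blocks
  set x : Fin n × Fin 4 → ℂ := fun p => c p.1 * (![d i₁, d i₀, c i₀, c i₁] p.2) / D with hx
  have hvK : ∀ k : Fin 4, (![d i₁, d i₀, c i₀, c i₁] k) ∈ K := by
    intro k
    fin_cases k <;> simp [hdK, hcK]
  have hxK : ∀ p, x p ∈ K := fun p =>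
    div_mem (mul_mem (hcK p.1) (hvK p.2)) hDK
  have halg : ∀ p, IsAlgebraic ℚ (x p) := by
    intro p
    have : IsIntegral ℚ ((⟨x p, hxK p⟩ : K)) := IsIntegral.of_finite ℚ _
    have h2 : IsIntegral ℚ (x p) := this.map (IsScalarTower.toAlgHom ℚ K ℂ)
    exact h2.isAlgebraic
  obtain ⟨N, hN, hNi⟩ := aux_exists_den x halg
  refine ⟨N, hN, fun a lam lam' heq => ?_⟩
  have h0 := heq i₀
  have h1 := heq i₁
  have expand : ∀ (i : Fin n) (e : ℂ),
      (∑ j, (a i j : ℂ) * (c j * e / D)) = (∑ j, (a i j : ℂ) * c j) * e / D := by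
    intro i e
    rw [Finset.sum_mul, Finset.sum_div]
    exact Finset.sum_congr rfl fun j _ => by ring
  have hlamD : lam * D = (∑ j, (a i₀ j : ℂ) * c j) * d i₁ - (∑ j, (a i₁ j : ℂ) * c j) * d i₀ := by
    rw [h0, h1, hDdef]; ring
  have hlamD' : lam' * D = (∑ j, (a i₁ j : ℂ) * c j) * c i₀ - (∑ j, (a i₀ j : ℂ) * c j) * c i₁ := by
    rw [h0, h1, hDdef]; ring
  have hlam2 : lam = ∑ j, (a i₀ j : ℂ) * (c j * d i₁ / D) - ∑ j, (a i₁ j : ℂ) * (c j * d i₀ / D) := by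
    rw [expand, expand, div_sub_div_same, ← hlamD, mul_div_cancel_right₀ _ hD]
  have hlam2' : lam' = ∑ j, (a i₁ j : ℂ) * (c j * c i₀ / D) - ∑ j, (a i₀ j : ℂ) * (c j * c i₁ / D) := by
    rw [expand, expand, div_sub_div_same, ← hlamD', mul_div_cancel_right₀ _ hD]
  have key : ∀ (u : ℂ) (i i' : Fin n) (k k' : Fin 4),
      u = ∑ j, (a i j : ℂ) * (x (j, k)) - ∑ j, (a i' j : ℂ) * (x (j, k')) →
      IsIntegral ℤ ((N : ℂ) * u) ∧ (N : ℂ) * u ∈ K := by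
    intro u i i' k k' hu
    constructor
    · have : (N : ℂ) * u = ∑ j, (a i j : ℂ) * ((N : ℂ) * x (j, k)) -
          ∑ j, (a i' j : ℂ) * ((N : ℂ) * x (j, k')) := by
        rw [hu, mul_sub, Finset.mul_sum, Finset.mul_sum]
        congr 1 <;> exact Finset.sum_congr rfl fun j _ => by ring
      rw [this]
      exact ((IsIntegral.sum _ fun j _ => (aux_int_cast_integral _).mul (hNi (j, k)))).sub
        ((IsIntegral.sum _ fun j _ => (aux_int_cast_integral _).mul (hNi (j, k'))))
    · have huK : u ∈ K := by
        rw [hu]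
        exact sub_mem
          (sum_mem fun j _ => mul_mem (intCast_mem K _) (hxK (j, k)))
          (sum_mem fun j _ => mul_mem (intCast_mem K _) (hxK (j, k')))
      exact mul_mem (natCast_mem K N) huK
  have r1 := key lam i₀ i₁ 0 1 (by simpa [hx] using hlam2)
  have r2 := key lam' i₁ i₀ 2 3 (by simpa [hx] using hlam2')
  exact ⟨r1.1, r1.2, r2.1, r2.2⟩
end

section
/- Let T be a finite-dimensional ℚ-vector space with a symmetric ℚ-bilinear form b, and let K be a subfield of the ℚ-algebra End_ℚ(T) (a commutative ℚ-subalgebra that is a field) such that T, viewed as a K-vector space via this action, has dim_K T = 1, and such that every α ∈ K admits an adjoint α' ∈ K with b(α(x), y) = b(x, α'(y)) for all x, y ∈ T. Let σ ∈ T ⊗_ℚ ℂ and let g : K → ℂ be a ring homomorphism such that the ℂ-linear extension of every α ∈ K satisfies α_ℂ(σ) = g(α)·σ. Assume there exists γ₁ ∈ T with b_ℂ(σ, γ₁) = 1, where b_ℂ denotes the ℂ-bilinear extension of b. Then b_ℂ(σ, γ) lies in the subfield g(K) ⊆ ℂ for every γ ∈ T; in particular, the period field ℚ({b_ℂ(σ,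 γ) : γ ∈ T}) is contained in g(K). -/
open scoped TensorProduct

noncomputable section

/-- Let `T` be a finite-dimensional `ℚ`-vector space with a symmetric bilinear form `b` and
`K ⊆ End_ℚ(T)` a commutative `ℚ`-subalgebra which is a field, with `dim_K T = 1` and such
that every `α ∈ K` admits an adjoint `α' ∈ K`.  Let `σ ∈ T ⊗_ℚ ℂ` and `g : K → ℂ` a ring
homomorphism with `α_ℂ(σ) = g(α)·σ` for all `α ∈ K`, and suppose `b_ℂ(σ, γ₁) = 1` for some
`γ₁ ∈ T`.  Then `b_ℂ(σ, γ) ∈ g(K)` for all `γ ∈ T`; in particular the period field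
`ℚ({b_ℂ(σ, γ)})` is contained in `g(K)`. -/
theorem stmt_7 {T : Type*} [AddCommGroup T] [Module ℚ T] [FiniteDimensional ℚ T]
    (b : T →ₗ[ℚ] T →ₗ[ℚ] ℚ) (hsymm : ∀ x y, b x y = b y x)
    (K : Subalgebra ℚ (Module.End ℚ T)) (hK : IsField K)
    -- `dim_K T = 1`: some nonzero `t ∈ T` is a `K`-basis of `T`
    (hdim : ∃ t : T, t ≠ 0 ∧ ∀ x : T, ∃ α ∈ K, α t = x)
    (hadj : ∀ α ∈ K, ∃ α' ∈ K, ∀ x y : T, b (α x) y = b x (α' y))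
    (σ : ℂ ⊗[ℚ] T) (g : K →+* ℂ)
    (hg : ∀ α : K, LinearMap.baseChange ℂ (α : Module.End ℚ T) σ = g α • σ)
    (hγ₁ : ∃ γ₁ : T, LinearMap.BilinForm.baseChange ℂ b σ ((1 : ℂ) ⊗ₜ[ℚ] γ₁) = 1) :
    (∀ γ : T, LinearMap.BilinForm.baseChange ℂ b σ ((1 : ℂ) ⊗ₜ[ℚ] γ) ∈ Set.range g) ∧
      ∀ z ∈ Subfield.closure
        (Set.range fun γ : T => LinearMap.BilinForm.baseChange ℂ b σ ((1 : ℂ) ⊗ₜ[ℚ] γ)),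
        z ∈ Set.range g := by
  obtain ⟨γ₁, hγ1⟩ := hγ₁
  set Bc := LinearMap.BilinForm.baseChange ℂ b with hBc
  -- swap lemma
  have swap : ∀ (α α' : Module.End ℚ T), (∀ x y : T, b (α x) y = b x (α' y)) →
      ∀ (τ : ℂ ⊗[ℚ] T) (y : T),
      Bc τ ((1 : ℂ) ⊗ₜ[ℚ] α y) = Bc (LinearMap.baseChange ℂ α' τ) ((1 : ℂ) ⊗ₜ[ℚ] y) := by
    intro α α' h τ y
    induction τ using TensorProduct.induction_on with
    | zero => simp
    | tmul c x =>
        simp only [LinearMap.baseChange_tmul, hBc, LinearMap.BilinForm.baseChange_tmul]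
        have : b x (α y) = b (α' x) y := by
          rw [hsymm x (α y), h, hsymm y (α' x)]
        rw [this]
    | add u v hu hv => simp [map_add, hu, hv]
  have main : ∀ γ : T, Bc σ ((1 : ℂ) ⊗ₜ[ℚ] γ) ∈ Set.range g := by
    intro γ
    obtain ⟨t, ht0, hgen⟩ := hdim
    obtain ⟨β, hβK, hβ⟩ := hgen γ₁
    obtain ⟨δ, hδK, hδ⟩ := hgen γ
    -- β ≠ 0 in K
    have hβne : (⟨β, hβK⟩ : K) ≠ 0 := by
      intro h
      have : β = 0 := congrArg Subtype.val h
      rw [this] at hβ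
      simp only [LinearMap.zero_apply] at hβ
      rw [← hβ] at hγ1
      simp [hBc] at hγ1
    obtain ⟨β', hββ'⟩ := hK.mul_inv_cancel hβne
    -- α = δ * β'⁻¹ sends γ₁ to γ
    set α : K := ⟨δ, hδK⟩ * β'
    have hαγ₁ : (α : Module.End ℚ T) γ₁ = γ := by
      have h1 : (β' : Module.End ℚ T) ((β : Module.End ℚ T) t) = t := by
        have : (⟨β, hβK⟩ : K) * β' = 1 := hββ'
        have h2 : ((⟨β, hβK⟩ : K) * β' : K) = (β' * ⟨β, hβK⟩ : K) := hK.mul_comm _ _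
        have h3 : (β' * ⟨β, hβK⟩ : K) = 1 := h2 ▸ this
        have h4 : (β' : Module.End ℚ T) * β = 1 := congrArg Subtype.val h3
        calc (β' : Module.End ℚ T) ((β : Module.End ℚ T) t)
            = ((β' : Module.End ℚ T) * β) t := rfl
          _ = t := by rw [h4]; rfl
      show (δ * (β' : Module.End ℚ T)) γ₁ = γ
      rw [← hβ]
      show δ ((β' : Module.End ℚ T) (β t)) = γ
      rw [h1, hδ]
    obtain ⟨α', hα'K, hα'⟩ := hadj (α : Module.End ℚ T) α.2
    refine ⟨⟨α', hα'K⟩, ?_⟩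
    rw [← hαγ₁, swap (α : Module.End ℚ T) α' hα' σ γ₁, hg ⟨α', hα'K⟩]
    simp only [map_smul, LinearMap.smul_apply, smul_eq_mul, hγ1, mul_one, hBc]
    rw [← hBc, hγ1, mul_one]
  refine ⟨main, ?_⟩
  letI : Field K := hK.toField
  have hsub : (Set.range fun γ : T => Bc σ ((1 : ℂ) ⊗ₜ[ℚ] γ)) ⊆ (g.fieldRange : Set ℂ) := by
    rintro z ⟨γ, rfl⟩
    exact main γ
  intro z hz
  have := (Subfield.closure_le.mpr hsub) hz
  exact this
end
end
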